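/- Let α > 0, m ∈ ℕ, and let φ(z) = a z (1 + h(z)) with |a| = 1, h holomorphic on B(0,r), h(0) = 0, |h(z)| ≤ 1/2 on B(0,r). Define, on the slit disc where all branches are principal, F(z) := φ(z)^α (Log φ(z))^m using Log φ(z) = Log a + Log(1 + h(z)) + Log z. Then there exist holomorphic functions g₀,…,g_m on B(0,r) such that F(z) = z^α Σ_{ℓ=0}^{m} g_ℓ(z) (Log z)^ℓ, and for each ℓ, |g_ℓ(z)| ≤ 2^{m+α} (|Arg a| + 3)^m for all z ∈ B(0,r). -/

import Mathlib

open Metric Finset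

/-- Lemma 1.20 of the paper in the case `k(φ) = 1`, `|a| = 1`, with principal
branches: writing `Log φ(z) = Log a + Log (1 + h z) + Log z`, the function
`φ(z)^α (Log φ(z))^m` equals `z^α Σ_{ℓ≤m} g_ℓ(z) (Log z)^ℓ` with holomorphic
`g_ℓ` bounded by `2^{m+α} (|Arg a| + 3)^m` on `B(0,r)`. -/
theorem log_power_composition (α : ℝ) (hα : 0 < α) (m : ℕ)
    (r : ℝ) (hr : 0 < r) (a : ℂ) (ha : ‖a‖ = 1)
    (h : ℂ → ℂ) (hh : DifferentiableOn ℂ h (ball (0 : ℂ) r))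
    (h0 : h 0 = 0) (hb : ∀ z : ℂ, ‖z‖ < r → ‖h z‖ ≤ 1 / 2) :
    ∃ g : ℕ → ℂ → ℂ,
      (∀ ℓ ≤ m, DifferentiableOn ℂ (g ℓ) (ball (0 : ℂ) r)) ∧
      (∀ ℓ ≤ m, ∀ z : ℂ, ‖z‖ < r →
        ‖g ℓ z‖ ≤ (2 : ℝ) ^ ((m : ℝ) + α) * (|Complex.arg a| + 3) ^ m) ∧
      (∀ z : ℂ, ‖z‖ < r → z ≠ 0 →
        Complex.exp ((α : ℂ) *
            (Complex.log a + Complex.log (1 + h z) + Complex.log z)) *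
          (Complex.log a + Complex.log (1 + h z) + Complex.log z) ^ m =
        z ^ (α : ℂ) *
          ∑ ℓ ∈ range (m + 1), g ℓ z * (Complex.log z) ^ ℓ) := by
  set A : ℂ → ℂ := fun z => Complex.log a + Complex.log (1 + h z) with hA
  refine ⟨fun ℓ z => (m.choose ℓ : ℂ) * Complex.exp ((α : ℂ) * A z) * A z ^ (m - ℓ),
    ?_, ?_, ?_⟩
  · -- differentiability
    have hmem : ∀ z ∈ ball (0 : ℂ) r, (1 + h z) ∈ Complex.slitPlane := by
      intro z hz
      simp only [mem_ball, dist_zero_right] at hz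
      have hb' := hb z hz
      left
      have hre : |(h z).re| ≤ ‖h z‖ := Complex.abs_re_le_norm _
      have := abs_le.mp hre
      simp only [Complex.add_re, Complex.one_re]
      linarith [this.1]
    have h1 : DifferentiableOn ℂ (fun z => (1 : ℂ) + h z) (ball (0 : ℂ) r) :=
      (differentiableOn_const _).add hh
    have hlog : DifferentiableOn ℂ (fun z => Complex.log (1 + h z)) (ball (0 : ℂ) r) :=
      h1.clog hmem
    have hAdiff : DifferentiableOn ℂ A (ball (0 : ℂ) r) :=
      (differentiableOn_const _).add hlog
    intro ℓ _
    exact ((differentiableOn_const _).mul ((hAdiff.const_mul _).cexp)).mul (hAdiff.pow _)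
  · -- bounds
    intro ℓ hℓ z hz
    have hb' := hb z hz
    have hre : (1 : ℝ) / 2 ≤ (1 + h z).re := by
      have hre' : |(h z).re| ≤ ‖h z‖ := Complex.abs_re_le_norm _
      have := abs_le.mp hre'
      simp only [Complex.add_re, Complex.one_re]
      linarith [this.1]
    have hnorm_lb : (1 : ℝ) / 2 ≤ ‖1 + h z‖ :=
      le_trans (le_trans hre (le_abs_self _)) (Complex.abs_re_le_norm _)
    have hnorm_ub : ‖1 + h z‖ ≤ 2 := by
      calc ‖1 + h z‖ ≤ ‖(1 : ℂ)‖ + ‖h z‖ := norm_add_le _ _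
        _ ≤ 2 := by rw [norm_one]; linarith
    -- bound on exp(α A z)
    have hexp : ‖Complex.exp ((α : ℂ) * A z)‖ ≤ (2 : ℝ) ^ α := by
      rw [Complex.norm_exp]
      have hre' : ((α : ℂ) * A z).re = α * (A z).re := by
        simp [Complex.mul_re]
      rw [hre']
      have hAre : (A z).re = Real.log ‖1 + h z‖ := by
        have ha' : ‖a‖ = 1 := ha
        simp only [hA, Complex.add_re, Complex.log_re, ha', Real.log_one, zero_add]
      rw [hAre]
      have hlog2 : Real.log ‖1 + h z‖ ≤ Real.log 2 :=
        Real.log_le_log (by linarith) hnorm_ub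
      calc Real.exp (α * Real.log ‖1 + h z‖) ≤ Real.exp (α * Real.log 2) :=
            Real.exp_le_exp.mpr (by nlinarith)
        _ = (2 : ℝ) ^ α := by
            rw [Real.rpow_def_of_pos (by norm_num : (0:ℝ) < 2), mul_comm]
    -- bound on ‖A z‖
    have hAle : ‖A z‖ ≤ |Complex.arg a| + 3 := by
      have h1 : ‖Complex.log a‖ ≤ |Complex.arg a| := by
        calc ‖Complex.log a‖ ≤ |(Complex.log a).re| + |(Complex.log a).im| :=
              Complex.norm_le_abs_re_add_abs_im _
          _ = |Complex.arg a| := by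
              have ha' : ‖a‖ = 1 := ha
              simp [Complex.log_re, Complex.log_im, ha']
      have h2 : ‖Complex.log (1 + h z)‖ ≤ 3 := by
        have hre'' : |(Complex.log (1 + h z)).re| ≤ 1 := by
          rw [Complex.log_re, abs_le]
          constructor
          · have : Real.log (1/2 : ℝ) ≤ Real.log ‖1 + h z‖ :=
              Real.log_le_log (by norm_num) hnorm_lb
            have hl : Real.log (1/2 : ℝ) = - Real.log 2 := by
              rw [one_div, Real.log_inv]
            nlinarith [Real.log_two_lt_d9]
          · have : Real.log ‖1 + h z‖ ≤ Real.log 2 :=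
              Real.log_le_log (by linarith) hnorm_ub
            nlinarith [Real.log_two_lt_d9]
        have harg : |(Complex.log (1 + h z)).im| ≤ Real.pi / 2 := by
          rw [Complex.log_im]
          exact Complex.abs_arg_le_pi_div_two_iff.mpr (by linarith)
        calc ‖Complex.log (1 + h z)‖
            ≤ |(Complex.log (1 + h z)).re| + |(Complex.log (1 + h z)).im| :=
              Complex.norm_le_abs_re_add_abs_im _
          _ ≤ 1 + Real.pi / 2 := add_le_add hre'' harg
          _ ≤ 3 := by nlinarith [Real.pi_le_four]
      calc ‖A z‖ ≤ ‖Complex.log a‖ + ‖Complex.log (1 + h z)‖ := norm_add_le _ _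
        _ ≤ |Complex.arg a| + 3 := add_le_add h1 h2
    have hApow : ‖A z ^ (m - ℓ)‖ ≤ (|Complex.arg a| + 3) ^ m := by
      rw [norm_pow]
      calc ‖A z‖ ^ (m - ℓ) ≤ (|Complex.arg a| + 3) ^ (m - ℓ) :=
            pow_le_pow_left₀ (norm_nonneg _) hAle _
        _ ≤ (|Complex.arg a| + 3) ^ m :=
            pow_le_pow_right₀ (by linarith [abs_nonneg (Complex.arg a)]) (Nat.sub_le _ _)
    have hchoose : (m.choose ℓ : ℝ) ≤ 2 ^ m := by
      have : m.choose ℓ ≤ 2 ^ m := by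
        rw [← Nat.sum_range_choose m]
        exact Finset.single_le_sum (fun i _ => Nat.zero_le _) (mem_range.mpr (by omega))
      exact_mod_cast this
    calc ‖(m.choose ℓ : ℂ) * Complex.exp ((α : ℂ) * A z) * A z ^ (m - ℓ)‖
        = (m.choose ℓ : ℝ) * ‖Complex.exp ((α : ℂ) * A z)‖ * ‖A z ^ (m - ℓ)‖ := by
          rw [norm_mul, norm_mul]
          norm_num
      _ ≤ (2 : ℝ) ^ m * (2 : ℝ) ^ α * (|Complex.arg a| + 3) ^ m := by
          have h2m : (0:ℝ) ≤ (2:ℝ) ^ m * (2:ℝ) ^ α := by positivity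
          exact mul_le_mul (mul_le_mul hchoose hexp (norm_nonneg _) (by positivity))
            hApow (norm_nonneg _) h2m
      _ = (2 : ℝ) ^ ((m : ℝ) + α) * (|Complex.arg a| + 3) ^ m := by
          rw [Real.rpow_add (by norm_num), Real.rpow_natCast]
  · -- the identity
    intro z hz hz0
    rw [Complex.cpow_def_of_ne_zero hz0]
    have e1 : (α : ℂ) * (A z + Complex.log z) = (α : ℂ) * A z + (α : ℂ) * Complex.log z :=
      mul_add _ _ _
    rw [show Complex.log a + Complex.log (1 + h z) + Complex.log z = A z + Complex.log z
      from rfl, e1, Complex.exp_add, add_comm (A z) (Complex.log z), add_pow,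
      Finset.mul_sum, Finset.mul_sum]
    refine Finset.sum_congr rfl fun ℓ hℓ => ?_
    rw [show Complex.log z * (α : ℂ) = (α : ℂ) * Complex.log z from mul_comm _ _]
    simp only []
    ring
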